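/- For real sequences, suppose $a_j \leq \frac{2\sqrt{j}}{C}\, a_i$ for all $i \leq j \leq n$ where $C > 0$ and $a_i > 0$, and suppose $T + a_n - a_i \leq \sum_{j=i}^{n} \frac{a_j}{j}$ where $T = \sum_{j=i}^{n-1} b_j \geq 0$. Then $T + a_n \leq \Big(1 + \frac{2}{C}\sum_{j=i}^{n}\frac{1}{\sqrt{j}}\Big) a_i$. -/

import Mathlib

theorem stmt19 (n i : ℕ) (hi : 1 ≤ i) (hin : i ≤ n)
    (a b : ℕ → ℝ) (C : ℝ) (hC : 0 < C) (ha : 0 < a i)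
    (h1 : ∀ j, i ≤ j → j ≤ n → a j ≤ (2 * Real.sqrt j / C) * a i)
    (hT : 0 ≤ ∑ j ∈ Finset.Ico i n, b j)
    (h2 : (∑ j ∈ Finset.Ico i n, b j) + a n - a i ≤ ∑ j ∈ Finset.Icc i n, a j / j) :
    (∑ j ∈ Finset.Ico i n, b j) + a n
      ≤ (1 + (2 / C) * ∑ j ∈ Finset.Icc i n, 1 / Real.sqrt j) * a i := by
  have key : ∑ j ∈ Finset.Icc i n, a j / j
      ≤ ∑ j ∈ Finset.Icc i n, (2 / C) * (1 / Real.sqrt j) * a i := by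
    apply Finset.sum_le_sum
    intro j hj
    simp only [Finset.mem_Icc] at hj
    have hj1 : (1 : ℕ) ≤ j := le_trans hi hj.1
    have hjpos : (0 : ℝ) < (j : ℝ) := by exact_mod_cast hj1
    have hsq : Real.sqrt j > 0 := Real.sqrt_pos.2 hjpos
    have h := h1 j hj.1 hj.2
    have : a j / j ≤ (2 * Real.sqrt j / C) * a i / j :=
      div_le_div_of_nonneg_right h hjpos.le
    refine this.trans_eq ?_
    field_simp
    exact Real.sq_sqrt hjpos.le
  have h3 := h2.trans key
  have heq : (1 + (2 / C) * ∑ j ∈ Finset.Icc i n, 1 / Real.sqrt j) * a i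
      = a i + ∑ j ∈ Finset.Icc i n, (2 / C) * (1 / Real.sqrt j) * a i := by
    rw [add_mul, one_mul, Finset.mul_sum, Finset.sum_mul]
  linarith
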